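/- For λ anti-dominant, the generating function over quantum alcove paths satisfies the shift property C_{t_μ u}^{w} = x^μ · C_u^{w} for every μ ∈ X, where C_u^w = Σ_{p ∈ QB(u,w)} x^{wt(end(p))} q^{deg(qwt(p))}. -/

import Mathlib

/-!
STATEMENT 18: The generating function over quantum alcove paths
`C_u^w = Σ_{p ∈ QB(u,w)} x^{wt(end(p))} q^{deg(qwt(p))}` satisfies the shift property
`C_{t_μ u}^{w} = x^μ · C_u^{w}` for every `μ ∈ X` (here `w = t_λ` for `λ` anti-dominant).

We model: `We` is the extended affine Weyl group, `dir : We → W` and `wt : We → X` the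
components of the decomposition `z = t_{wt z} · dir z`, `t : X → We` the translations,
`s j ∈ We` the reflection in the `j`-th coroot `β_j` of the reduced decomposition of `w`,
`E` the edge relation of the quantum Bruhat graph on `W`, `qneg z j` whether the fold at
`z` in the wall `β_j` is a quantum edge, and `degβ j = deg β_j`.  A path is a folding set
`J ⊆ {1,…,l}`; `z₀ = u w`, `z_{k+1} = z_k s_{β_{j_{k+1}}}`; it is a quantum alcove path if
the projected steps are edges of the quantum Bruhat graph.  Characters live in the group
algebra `ℤ[X × ℤ]`, whose basis element `(x, q)` represents the monomial `x^{wt} q^{deg}`.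
-/

open scoped Classical

/-- The sequence `z₀ = u * w, z₁, …` of a folded alcove path with folding set `J`. -/
noncomputable def pathSeq {We : Type*} [Group We] {l : ℕ} (w : We) (s : Fin l → We)
    (u : We) (J : Finset (Fin l)) : List We :=
  (J.sort (· ≤ ·)).scanl (fun z j => z * s j) (u * w)

/-- The endpoint of the folded alcove path with folding set `J`. -/
noncomputable def pathEnd {We : Type*} [Group We] {l : ℕ} (w : We) (s : Fin l → We)
    (u : We) (J : Finset (Fin l)) : We :=
  (J.sort (· ≤ ·)).foldl (fun z j => z * s j) (u * w)

/-- The path is a quantum alcove path: its projection by `dir` is a path in the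
quantum Bruhat graph. -/
noncomputable def IsQuantumPath {We W : Type*} [Group We] {l : ℕ} (w : We)
    (s : Fin l → We) (dir : We → W) (E : W → W → Prop) (u : We) (J : Finset (Fin l)) :
    Prop :=
  List.Chain' E ((pathSeq w s u J).map dir)

/-- `deg (qwt p)`: the sum of the degrees of the coroots at the quantum foldings. -/
noncomputable def qwtDeg {We : Type*} [Group We] {l : ℕ} (w : We) (s : Fin l → We)
    (qneg : We → Fin l → Bool) (degβ : Fin l → ℤ) (u : We) (J : Finset (Fin l)) : ℤ :=
  (((pathSeq w s u J).tail).zip (J.sort (· ≤ ·))).foldl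
    (fun acc p => if qneg p.1 p.2 then acc + degβ p.2 else acc) 0

/-- The generating function `C_u^w` as an element of `ℤ[X × ℤ]`. -/
noncomputable def genFunC {We W : Type*} [Group We] {X : Type*} [AddCommGroup X] {l : ℕ}
    (w : We) (s : Fin l → We) (dir : We → W) (E : W → W → Prop) (wt : We → X)
    (qneg : We → Fin l → Bool) (degβ : Fin l → ℤ) (u : We) :
    AddMonoidAlgebra ℤ (X × ℤ) :=
  ∑ J : Finset (Fin l),
    if IsQuantumPath w s dir E u J then
      AddMonoidAlgebra.single (wt (pathEnd w s u J), qwtDeg w s qneg degβ u J) 1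
    else 0


private lemma scanl_mul {We : Type*} {α : Type*} [Group We] (f : We) (s : We → α → We)
    (hs : ∀ a b, s (f * a) b = f * s a b) :
    ∀ (L : List α) (z : We), L.scanl s (f * z) = (L.scanl s z).map (f * ·) := by
  intro L
  induction L with
  | nil => intro z; simp
  | cons a L ih => intro z; simp [List.scanl_cons, hs, ih]

private lemma foldl_mul {We : Type*} {α : Type*} [Group We] (f : We) (s : We → α → We)
    (hs : ∀ a b, s (f * a) b = f * s a b) :
    ∀ (L : List α) (z : We), L.foldl s (f * z) = f * L.foldl s z := by
  intro L
  induction L with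
  | nil => intro z; simp
  | cons a L ih => intro z; simp [List.foldl, hs, ih]

theorem genFunC_translation_shift
    {We W : Type*} [Group We] {X : Type*} [AddCommGroup X] {l : ℕ}
    (w : We)                              -- `w = t_λ`, `λ` anti-dominant
    (s : Fin l → We)                      -- reflections `s_{β_j}` of a reduced word for `w`
    (dir : We → W) (wt : We → X)          -- `z = t_{wt z} · dir z`
    (t : X → We)                          -- translations `μ ↦ t_μ`
    (E : W → W → Prop)                    -- quantum Bruhat graph edge relation
    (qneg : We → Fin l → Bool) (degβ : Fin l → ℤ)
    (hdir : ∀ (μ : X) (z : We), dir (t μ * z) = dir z)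
    (hwt : ∀ (μ : X) (z : We), wt (t μ * z) = μ + wt z)
    (hqneg : ∀ (μ : X) (z : We) (j : Fin l), qneg (t μ * z) j = qneg z j)
    (μ : X) (u : We) :
    genFunC w s dir E wt qneg degβ (t μ * u) =
      AddMonoidAlgebra.single ((μ, 0) : X × ℤ) 1 * genFunC w s dir E wt qneg degβ u := by
  have hstep : ∀ (J : Finset (Fin l)),
      pathSeq w s (t μ * u) J = (pathSeq w s u J).map (t μ * ·) := by
    intro J
    unfold pathSeq
    rw [show t μ * u * w = t μ * (u * w) by group]
    exact scanl_mul (t μ) _ (fun a b => by group) _ _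
  have hend : ∀ (J : Finset (Fin l)),
      pathEnd w s (t μ * u) J = t μ * pathEnd w s u J := by
    intro J
    unfold pathEnd
    rw [show t μ * u * w = t μ * (u * w) by group]
    exact foldl_mul (t μ) _ (fun a b => by group) _ _
  have hpath : ∀ (J : Finset (Fin l)),
      IsQuantumPath w s dir E (t μ * u) J = IsQuantumPath w s dir E u J := by
    intro J
    unfold IsQuantumPath
    rw [hstep J, List.map_map]
    congr 1
    exact List.map_congr_left (fun x _ => hdir μ x)
  have hq : ∀ (J : Finset (Fin l)),
      qwtDeg w s qneg degβ (t μ * u) J = qwtDeg w s qneg degβ u J := by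
    intro J
    unfold qwtDeg
    rw [hstep J, ← List.map_tail, List.zip_map_left, List.foldl_map]
    congr 1
    funext acc p
    simp [hqneg]
  unfold genFunC
  rw [Finset.mul_sum]
  refine Finset.sum_congr rfl (fun J _ => ?_)
  rw [hpath J]
  by_cases h : IsQuantumPath w s dir E u J
  · rw [if_pos h, if_pos h, hend J, hwt, hq J, AddMonoidAlgebra.single_mul_single]
    simp
  · rw [if_neg h, if_neg h, mul_zero]
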